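/- For every positive integer k and every p ∈ (0,1), the sequence p_{k,n} satisfies p_{k,n} ~ α_k·(2πn)^{-β_k} as n → ∞, where α_k = (p(1-p))^{(-1/2)^k} and β_k = (1-(-1/2)^k)/3; that is, lim_{n→∞} p_{k,n} / (α_k·(2πn)^{-β_k}) = 1. -/

import Mathlib

open Real Filter Topology

/-- Generalized binomial coefficient `binom(n, α) = n! / (Γ(α+1)·Γ(n-α+1))`. -/
noncomputable def gbinom (n : ℕ) (a : ℝ) : ℝ :=
  (n.factorial : ℝ) / (Real.Gamma (a + 1) * Real.Gamma ((n : ℝ) - a + 1))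

/-- The function `P_n(p) = binom(n, np) · p^(np) · (1-p)^(n(1-p))`. -/
noncomputable def Pn (n : ℕ) (p : ℝ) : ℝ :=
  gbinom n ((n : ℝ) * p) * p ^ ((n : ℝ) * p) * (1 - p) ^ ((n : ℝ) * (1 - p))

noncomputable def Gf (x : ℝ) : ℝ := x * Real.log x - x + Real.log (2 * π * x) / 2

lemma tendsto_log_factorial_sub_Gf :
    Tendsto (fun n : ℕ => Real.log n.factorial - Gf n) atTop (𝓝 0) := by
  have h := Stirling.factorial_isEquivalent_stirling
  rw [Asymptotics.isEquivalent_iff_tendsto_one ?_] at h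
  · have hlog : Tendsto (fun n : ℕ =>
        Real.log ((n.factorial : ℝ) / (Real.sqrt (2 * n * π) * (n / exp 1) ^ n)))
        atTop (𝓝 0) := by
      have := (Real.continuousAt_log one_ne_zero).tendsto
      simpa [Function.comp_def] using this.comp h
    refine hlog.congr' ?_
    filter_upwards [eventually_ge_atTop 1] with n hn
    have hn0 : (0:ℝ) < n := by exact_mod_cast hn
    have hs : (0:ℝ) < Real.sqrt (2 * n * π) := Real.sqrt_pos.2 (by positivity)
    have hp : (0:ℝ) < ((n:ℝ) / exp 1) ^ n := by positivity
    have hf : (0:ℝ) < n.factorial := by exact_mod_cast n.factorial_pos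
    rw [Real.log_div hf.ne' (by positivity), Real.log_mul hs.ne' hp.ne',
      Real.log_sqrt (by positivity), Real.log_pow, Real.log_div hn0.ne' (exp_ne_zero 1),
      Real.log_exp, Gf]
    have : 2 * (n:ℝ) * π = 2 * π * n := by ring
    rw [this]
    ring
  · filter_upwards [eventually_ge_atTop 1] with n hn
    have hn0 : (0:ℝ) < n := by exact_mod_cast hn
    positivity


lemma gamma_interp_upper (n : ℕ) (hn : 1 ≤ n) (s : ℝ) (hs0 : 0 ≤ s) (hs1 : s ≤ 1) :
    Real.log (Real.Gamma ((n:ℝ) + s + 1)) ≤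
      Real.log n.factorial + s * Real.log ((n:ℝ) + 1) := by
  have hc := Real.convexOn_log_Gamma.2
    (show ((n:ℝ)+1) ∈ Set.Ioi (0:ℝ) by simp [Set.mem_Ioi]; positivity)
    (show ((n:ℝ)+2) ∈ Set.Ioi (0:ℝ) by simp [Set.mem_Ioi]; positivity)
    (show (0:ℝ) ≤ 1 - s by linarith) hs0 (show (1-s) + s = 1 by ring)
  have hxy : (1 - s) • ((n:ℝ)+1) + s • ((n:ℝ)+2) = (n:ℝ) + s + 1 := by
    simp [smul_eq_mul]; ring
  rw [hxy] at hc
  have h1 : Real.Gamma ((n:ℝ)+1) = n.factorial := Real.Gamma_nat_eq_factorial n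
  have h2 : Real.Gamma ((n:ℝ)+2) = (n+1).factorial := by
    have := Real.Gamma_nat_eq_factorial (n+1)
    push_cast at this ⊢
    rw [← this]; ring_nf
  have h3 : Real.log ((n+1).factorial : ℝ) = Real.log ((n:ℝ)+1) + Real.log n.factorial := by
    rw [Nat.factorial_succ]
    push_cast
    rw [Real.log_mul (by positivity) (by exact_mod_cast n.factorial_pos.ne')]
  simp only [Function.comp_apply] at hc
  rw [h1, h2, h3] at hc
  simp only [smul_eq_mul] at hc; nlinarith [hc]

lemma gamma_interp_lower (n : ℕ) (hn : 1 ≤ n) (s : ℝ) (hs0 : 0 ≤ s) (hs1 : s ≤ 1) :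
    Real.log n.factorial + s * Real.log n ≤ Real.log (Real.Gamma ((n:ℝ) + s + 1)) := by
  have hn0 : (0:ℝ) < n := by exact_mod_cast hn
  have h1s : (0:ℝ) < 1 + s := by linarith
  have hc := Real.convexOn_log_Gamma.2
    (show (n:ℝ) ∈ Set.Ioi (0:ℝ) by simpa using hn0)
    (show ((n:ℝ)+1+s) ∈ Set.Ioi (0:ℝ) by simp [Set.mem_Ioi]; linarith)
    (show (0:ℝ) ≤ s/(1+s) by positivity) (show (0:ℝ) ≤ 1/(1+s) by positivity)
    (show s/(1+s) + 1/(1+s) = 1 by field_simp; ring)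
  have hxy : (s/(1+s)) • (n:ℝ) + (1/(1+s)) • ((n:ℝ)+1+s) = (n:ℝ) + 1 := by
    simp only [smul_eq_mul]; field_simp; ring
  rw [hxy] at hc
  simp only [Function.comp_apply] at hc
  have h1 : Real.Gamma ((n:ℝ)+1) = n.factorial := Real.Gamma_nat_eq_factorial n
  have hg : Real.log (Real.Gamma (n:ℝ)) = Real.log n.factorial - Real.log n := by
    have hadd : Real.Gamma ((n:ℝ)+1) = (n:ℝ) * Real.Gamma n := Real.Gamma_add_one hn0.ne'
    have hgpos : 0 < Real.Gamma (n:ℝ) := Real.Gamma_pos_of_pos hn0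
    rw [← h1, hadd, Real.log_mul hn0.ne' hgpos.ne']
    ring
  rw [h1, hg] at hc
  simp only [smul_eq_mul] at hc
  have hc2 : (1+s) * Real.log n.factorial ≤ s * (Real.log n.factorial - Real.log n)
      + Real.log (Real.Gamma ((n:ℝ)+1+s)) := by
    have h := mul_le_mul_of_nonneg_left hc h1s.le
    have he : (1+s) * (s/(1+s) * (Real.log n.factorial - Real.log n)
          + 1/(1+s) * Real.log (Real.Gamma ((n:ℝ)+1+s)))
        = s * (Real.log n.factorial - Real.log n) + Real.log (Real.Gamma ((n:ℝ)+1+s)) := by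
      field_simp
    rw [he] at h
    exact h
  have heq : (n:ℝ) + 1 + s = (n:ℝ) + s + 1 := by ring
  rw [heq] at hc2
  linarith


lemma DG_bounds (x : ℝ) (hx : 2 ≤ x) :
    (Real.log (⌊x⌋₊).factorial - Gf ⌊x⌋₊) - 2/((⌊x⌋₊:ℕ):ℝ)
        ≤ Real.log (Real.Gamma (x+1)) - Gf x
    ∧ Real.log (Real.Gamma (x+1)) - Gf x
        ≤ (Real.log (⌊x⌋₊).factorial - Gf ⌊x⌋₊) + 2/((⌊x⌋₊:ℕ):ℝ) := by
  set n : ℕ := ⌊x⌋₊ with hn_def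
  have hn2 : 2 ≤ n := Nat.le_floor (by exact_mod_cast hx)
  have hn1 : 1 ≤ n := le_trans (by norm_num) hn2
  have hnR : (2:ℝ) ≤ n := by exact_mod_cast hn2
  have hn0 : (0:ℝ) < n := by linarith
  set s : ℝ := x - n with hs_def
  have hs0 : 0 ≤ s := by
    have := Nat.floor_le (by linarith : (0:ℝ) ≤ x)
    simp only [hs_def]; linarith
  have hs1 : s ≤ 1 := by
    have := (Nat.lt_floor_add_one x).le
    simp only [hs_def]; linarith
  have hxn : x = (n:ℝ) + s := by simp [hs_def]
  have hx0 : (0:ℝ) < x := by linarith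
  set L : ℝ := Real.log x - Real.log n with hL_def
  have hL0 : 0 ≤ L := by
    have := Real.log_le_log hn0 (by linarith : (n:ℝ) ≤ x)
    simp only [hL_def]; linarith
  have hL1 : L ≤ s / n := by
    have h := Real.log_le_sub_one_of_pos (show (0:ℝ) < x / n by positivity)
    rw [Real.log_div hx0.ne' hn0.ne'] at h
    have he : x / (n:ℝ) - 1 = s / n := by field_simp; exact hs_def.symm
    simp only [hL_def]; linarith [he ▸ h]
  have hL2 : s / x ≤ L := by
    have h := Real.log_le_sub_one_of_pos (show (0:ℝ) < (n:ℝ) / x by positivity)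
    rw [Real.log_div hn0.ne' hx0.ne'] at h
    have he : (n:ℝ) / x - 1 = -(s / x) := by
      rw [hs_def]; field_simp; ring
    simp only [hL_def]; linarith [he ▸ h]
  have hlx : Real.log x = Real.log n + L := by rw [hL_def]; ring
  have e1 : Real.log (2 * π * x) = Real.log (2 * π) + Real.log x :=
    Real.log_mul (by positivity) hx0.ne'
  have e2 : Real.log (2 * π * (n:ℝ)) = Real.log (2 * π) + Real.log n :=
    Real.log_mul (by positivity) hn0.ne'
  clear_value L
  clear hL_def
  clear_value s
  clear hs_def
  clear_value n
  clear hn_def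
  have h1n : 2/(n:ℝ) = 2 * (1/n) := by ring
  have h1npos : 0 ≤ 1/(n:ℝ) := by positivity
  have hGf : Gf x - Gf n - s * Real.log n = x * L - s + L / 2 := by
    simp only [Gf, e1, e2, hlx]
    linear_combination (Real.log (n:ℝ) - 1) * hxn
  have hE0 : 0 ≤ x * L - s + L / 2 := by
    have : s ≤ x * L := by
      have := mul_le_mul_of_nonneg_left hL2 hx0.le
      rwa [mul_div_cancel₀ _ hx0.ne'] at this
    linarith
  have hE2 : x * L - s + L / 2 ≤ 2 / n := by
    have h1 : x * L ≤ s + s * s / n := by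
      have h := mul_le_mul_of_nonneg_left hL1 hx0.le
      have hxs : x * (s / n) = s + s * s / n := by rw [hxn]; field_simp
      linarith [hxs ▸ h]
    have h3 : s * s / (n:ℝ) ≤ 1 / n := by gcongr; nlinarith
    have h4 : L ≤ 1 / n := hL1.trans (by gcongr)
    linarith
  have hup := gamma_interp_upper n hn1 s hs0 hs1
  have hlo := gamma_interp_lower n hn1 s hs0 hs1
  have hxs1 : x + 1 = (n:ℝ) + s + 1 := by rw [hxn]
  rw [← hxs1] at hup hlo
  have hlog_ratio : s * Real.log ((n:ℝ)+1) - s * Real.log n ≤ 1 / n := by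
    have h := Real.log_le_sub_one_of_pos (show (0:ℝ) < ((n:ℝ)+1) / n by positivity)
    rw [Real.log_div (by positivity) hn0.ne'] at h
    have he : ((n:ℝ)+1)/n - 1 = 1/n := by field_simp; ring
    rw [he] at h
    have hmono : Real.log n ≤ Real.log ((n:ℝ)+1) := Real.log_le_log hn0 (by linarith)
    calc s * Real.log ((n:ℝ)+1) - s * Real.log n
        = s * (Real.log ((n:ℝ)+1) - Real.log n) := by ring
      _ ≤ 1 * (1/n) := by nlinarith
      _ = 1 / n := by ring
  constructor
  · linarith
  · linarith

lemma tendsto_log_Gamma_sub_Gf :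
    Tendsto (fun x : ℝ => Real.log (Real.Gamma (x+1)) - Gf x) atTop (𝓝 0) := by
  have hd : Tendsto (fun n : ℕ => Real.log n.factorial - Gf n) atTop (𝓝 0) :=
    tendsto_log_factorial_sub_Gf
  have hfl : Tendsto (fun x : ℝ => ⌊x⌋₊) atTop atTop := tendsto_nat_floor_atTop
  have hdfl : Tendsto (fun x : ℝ => Real.log (⌊x⌋₊).factorial - Gf ⌊x⌋₊) atTop (𝓝 0) :=
    hd.comp hfl
  have h2fl : Tendsto (fun x : ℝ => 2 / ((⌊x⌋₊ : ℕ) : ℝ)) atTop (𝓝 0) :=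
    (tendsto_const_div_atTop_nhds_zero_nat 2).comp hfl
  have hlow : Tendsto (fun x : ℝ =>
      (Real.log (⌊x⌋₊).factorial - Gf ⌊x⌋₊) - 2 / ((⌊x⌋₊ : ℕ) : ℝ)) atTop (𝓝 0) := by
    simpa using hdfl.sub h2fl
  have hhigh : Tendsto (fun x : ℝ =>
      (Real.log (⌊x⌋₊).factorial - Gf ⌊x⌋₊) + 2 / ((⌊x⌋₊ : ℕ) : ℝ)) atTop (𝓝 0) := by
    simpa using hdfl.add h2fl
  refine tendsto_of_tendsto_of_tendsto_of_le_of_le' hlow hhigh ?_ ?_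
  · filter_upwards [eventually_ge_atTop (2:ℝ)] with x hx
    exact (DG_bounds x hx).1
  · filter_upwards [eventually_ge_atTop (2:ℝ)] with x hx
    exact (DG_bounds x hx).2


lemma core_eq (n : ℕ) (hn : 1 ≤ n) (q : ℝ) (hq0 : 0 < q) (hq1 : q < 1) :
    Pn n q * Real.sqrt (2*π*n*q*(1-q)) =
      Real.exp ((Real.log n.factorial - Gf n)
        - (Real.log (Real.Gamma ((n:ℝ)*q+1)) - Gf ((n:ℝ)*q))
        - (Real.log (Real.Gamma ((n:ℝ)*(1-q)+1)) - Gf ((n:ℝ)*(1-q)))) := by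
  have hn0 : (0:ℝ) < n := by exact_mod_cast hn
  have h1q : (0:ℝ) < 1 - q := by linarith
  have ha0 : (0:ℝ) < (n:ℝ)*q := mul_pos hn0 hq0
  have hb0 : (0:ℝ) < (n:ℝ)*(1-q) := mul_pos hn0 h1q
  have hΓa : 0 < Real.Gamma ((n:ℝ)*q+1) := Real.Gamma_pos_of_pos (by linarith)
  have hΓb : 0 < Real.Gamma ((n:ℝ)*(1-q)+1) := Real.Gamma_pos_of_pos (by linarith)
  have hfac : (0:ℝ) < n.factorial := by exact_mod_cast n.factorial_pos
  have hX0 : (0:ℝ) < 2*π*n*q*(1-q) := by positivity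
  -- log expansions
  have hla : Real.log ((n:ℝ)*q) = Real.log n + Real.log q := Real.log_mul hn0.ne' hq0.ne'
  have hlb : Real.log ((n:ℝ)*(1-q)) = Real.log n + Real.log (1-q) :=
    Real.log_mul hn0.ne' h1q.ne'
  have h2a : Real.log (2*π*((n:ℝ)*q)) = Real.log (2*π) + (Real.log n + Real.log q) := by
    rw [Real.log_mul (by positivity) ha0.ne', hla]
  have h2b : Real.log (2*π*((n:ℝ)*(1-q)))
      = Real.log (2*π) + (Real.log n + Real.log (1-q)) := by
    rw [Real.log_mul (by positivity) hb0.ne', hlb]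
  have h2n : Real.log (2*π*(n:ℝ)) = Real.log (2*π) + Real.log n :=
    Real.log_mul (by positivity) hn0.ne'
  have hlX : Real.log (2*π*(n:ℝ)*q*(1-q))
      = Real.log (2*π) + Real.log n + Real.log q + Real.log (1-q) := by
    rw [Real.log_mul (by positivity) h1q.ne', Real.log_mul (by positivity) hq0.ne', h2n]
  -- exponent identity
  have hexp : (Real.log n.factorial - Gf n)
        - (Real.log (Real.Gamma ((n:ℝ)*q+1)) - Gf ((n:ℝ)*q))
        - (Real.log (Real.Gamma ((n:ℝ)*(1-q)+1)) - Gf ((n:ℝ)*(1-q)))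
      = (Real.log n.factorial - Real.log (Real.Gamma ((n:ℝ)*q+1))
          - Real.log (Real.Gamma ((n:ℝ)*(1-q)+1)))
        + (Real.log q * ((n:ℝ)*q) + Real.log (1-q) * ((n:ℝ)*(1-q))
          + Real.log (2*π*(n:ℝ)*q*(1-q)) / 2) := by
    simp only [Gf, hla, hlb, h2a, h2b, h2n, hlX]
    ring
  have hsqrt : Real.sqrt (2*π*(n:ℝ)*q*(1-q))
      = Real.exp (Real.log (2*π*(n:ℝ)*q*(1-q)) / 2) := by
    rw [← Real.log_sqrt hX0.le, Real.exp_log (Real.sqrt_pos.2 hX0)]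
  rw [hexp, Real.exp_add, Real.exp_add, Real.exp_add, Real.exp_sub, Real.exp_sub,
    Real.exp_log hfac, Real.exp_log hΓa, Real.exp_log hΓb,
    ← Real.rpow_def_of_pos hq0, ← Real.rpow_def_of_pos h1q, ← hsqrt,
    Pn, gbinom, show (n:ℝ) - (n:ℝ)*q + 1 = (n:ℝ)*(1-q) + 1 by ring]
  ring

lemma core (q : ℕ → ℝ) (hq : ∀ᶠ n : ℕ in atTop, q n ∈ Set.Ioo (0:ℝ) 1)
    (ha : Tendsto (fun n : ℕ => (n:ℝ) * q n) atTop atTop)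
    (hb : Tendsto (fun n : ℕ => (n:ℝ) * (1 - q n)) atTop atTop) :
    Tendsto (fun n : ℕ => Pn n (q n) * Real.sqrt (2*π*n*(q n)*(1-q n))) atTop (𝓝 1) := by
  have hd := tendsto_log_factorial_sub_Gf
  have h1 : Tendsto (fun n : ℕ =>
      Real.log (Real.Gamma ((n:ℝ)*q n+1)) - Gf ((n:ℝ)*q n)) atTop (𝓝 0) :=
    tendsto_log_Gamma_sub_Gf.comp ha
  have h2 : Tendsto (fun n : ℕ =>
      Real.log (Real.Gamma ((n:ℝ)*(1-q n)+1)) - Gf ((n:ℝ)*(1-q n))) atTop (𝓝 0) :=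
    tendsto_log_Gamma_sub_Gf.comp hb
  have hΛ : Tendsto (fun n : ℕ => (Real.log n.factorial - Gf n)
      - (Real.log (Real.Gamma ((n:ℝ)*q n+1)) - Gf ((n:ℝ)*q n))
      - (Real.log (Real.Gamma ((n:ℝ)*(1-q n)+1)) - Gf ((n:ℝ)*(1-q n)))) atTop (𝓝 0) := by
    simpa using (hd.sub h1).sub h2
  have hexp : Tendsto (fun n : ℕ => Real.exp ((Real.log n.factorial - Gf n)
      - (Real.log (Real.Gamma ((n:ℝ)*q n+1)) - Gf ((n:ℝ)*q n))
      - (Real.log (Real.Gamma ((n:ℝ)*(1-q n)+1)) - Gf ((n:ℝ)*(1-q n))))) atTop (𝓝 1) := by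
    have := (Real.continuous_exp.tendsto 0).comp hΛ
    simpa [Function.comp_def] using this
  refine hexp.congr' ?_
  filter_upwards [hq, eventually_ge_atTop 1] with n hqn hn
  exact (core_eq n hn (q n) hqn.1 hqn.2).symm


lemma tendsto_2pin : Tendsto (fun n : ℕ => 2*π*(n:ℝ)) atTop atTop :=
  tendsto_natCast_atTop_atTop.const_mul_atTop (by positivity)

lemma base_case (p : ℝ) (hp0 : 0 < p) (hp1 : p < 1) :
    Tendsto (fun n : ℕ => Pn n p * ((p*(1-p)) ^ (1/2:ℝ) * (2*π*(n:ℝ)) ^ (1/2:ℝ)))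
      atTop (𝓝 1) := by
  have h1p : (0:ℝ) < 1 - p := by linarith
  have hc := core (fun _ => p)
    (Eventually.of_forall fun n => ⟨hp0, hp1⟩)
    (tendsto_natCast_atTop_atTop.atTop_mul_const hp0)
    (tendsto_natCast_atTop_atTop.atTop_mul_const h1p)
  refine hc.congr fun n => ?_
  congr 1
  rw [Real.sqrt_eq_rpow, ← Real.mul_rpow (by positivity) (by positivity)]
  congr 1
  ring

lemma step_lemma (q : ℕ → ℝ) (α β : ℝ) (hα : 0 < α) (hβ0 : 0 < β) (hβ1 : β < 1)
    (hq : Tendsto (fun n : ℕ => q n * (α⁻¹ * (2*π*(n:ℝ)) ^ β)) atTop (𝓝 1)) :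
    Tendsto (fun n : ℕ => Pn n (q n) * (α ^ (1/2:ℝ) * (2*π*(n:ℝ)) ^ ((1-β)/2)))
      atTop (𝓝 1) := by
  set u : ℕ → ℝ := fun n => q n * (α⁻¹ * (2*π*(n:ℝ)) ^ β) with hu_def
  have hqeq : ∀ n : ℕ, 1 ≤ n → q n = u n * (α * (2*π*(n:ℝ)) ^ (-β)) := by
    intro n hn
    have hn1 : (1:ℝ) ≤ n := by exact_mod_cast hn
    have hpos : (0:ℝ) < 2*π*(n:ℝ) := by positivity
    have hne : (2*π*(n:ℝ)) ^ β ≠ 0 := (Real.rpow_pos_of_pos hpos β).ne'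
    simp only [hu_def]
    rw [Real.rpow_neg hpos.le]
    field_simp
  have hrpow0 : Tendsto (fun n : ℕ => (2*π*(n:ℝ)) ^ (-β)) atTop (𝓝 0) :=
    (tendsto_rpow_neg_atTop hβ0).comp tendsto_2pin
  have hq0 : Tendsto q atTop (𝓝 0) := by
    have h : Tendsto (fun n : ℕ => u n * (α * (2*π*(n:ℝ)) ^ (-β))) atTop (𝓝 0) := by
      simpa using hq.mul (hrpow0.const_mul α)
    refine h.congr' ?_
    filter_upwards [eventually_ge_atTop 1] with n hn
    rw [← hqeq n hn]
  have hu_half : ∀ᶠ n : ℕ in atTop, (1:ℝ)/2 < u n :=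
    hq.eventually (lt_mem_nhds (by norm_num))
  have hq_small : ∀ᶠ n : ℕ in atTop, q n < 1/2 :=
    hq0.eventually (gt_mem_nhds (by norm_num))
  have hIoo : ∀ᶠ n : ℕ in atTop, q n ∈ Set.Ioo (0:ℝ) 1 := by
    filter_upwards [hu_half, hq_small, eventually_ge_atTop 1] with n h1 h2 hn
    have hn1 : (1:ℝ) ≤ n := by exact_mod_cast hn
    have hpos : (0:ℝ) < 2*π*(n:ℝ) := by positivity
    refine ⟨?_, by linarith⟩
    rw [hqeq n hn]
    have hfac : 0 < α * (2*π*(n:ℝ)) ^ (-β) := by positivity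
    exact mul_pos (by linarith) hfac
  have hnq : Tendsto (fun n : ℕ => (n:ℝ) * q n) atTop atTop := by
    have hlow : Tendsto (fun n : ℕ => α/2 * ((n:ℝ) * (2*π*(n:ℝ)) ^ (-β))) atTop atTop := by
      have hpow : Tendsto (fun n : ℕ => (2*π*(n:ℝ)) ^ (1-β)) atTop atTop :=
        (tendsto_rpow_atTop (by linarith)).comp tendsto_2pin
      have h2 : Tendsto (fun n : ℕ => (2*π)⁻¹ * (2*π*(n:ℝ)) ^ (1-β)) atTop atTop :=
        hpow.const_mul_atTop (by positivity)
      refine (h2.congr' ?_).const_mul_atTop (by positivity : (0:ℝ) < α/2)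
      filter_upwards [eventually_ge_atTop 1] with n hn
      have hn1 : (1:ℝ) ≤ n := by exact_mod_cast hn
      have hpos : (0:ℝ) < 2*π*(n:ℝ) := by positivity
      rw [show (1:ℝ)-β = 1 + -β by ring, Real.rpow_add hpos, Real.rpow_one]
      field_simp
    refine tendsto_atTop_mono' _ ?_ hlow
    filter_upwards [hu_half, eventually_ge_atTop 1] with n h1 hn
    have hn1 : (1:ℝ) ≤ n := by exact_mod_cast hn
    have hpos : (0:ℝ) < 2*π*(n:ℝ) := by positivity
    have hrp : (0:ℝ) < (2*π*(n:ℝ)) ^ (-β) := Real.rpow_pos_of_pos hpos _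
    have hfac : (0:ℝ) ≤ (n:ℝ) * (2*π*(n:ℝ)) ^ (-β) := by positivity
    calc α/2 * ((n:ℝ) * (2*π*(n:ℝ)) ^ (-β))
        ≤ u n * α * ((n:ℝ) * (2*π*(n:ℝ)) ^ (-β)) :=
          mul_le_mul_of_nonneg_right (by nlinarith : α/2 ≤ u n * α) hfac
      _ = (n:ℝ) * (u n * (α * (2*π*(n:ℝ)) ^ (-β))) := by ring
      _ = (n:ℝ) * q n := by rw [← hqeq n hn]
  have hn1q : Tendsto (fun n : ℕ => (n:ℝ) * (1 - q n)) atTop atTop := by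
    have hlow : Tendsto (fun n : ℕ => (n:ℝ) * (1/2)) atTop atTop :=
      tendsto_natCast_atTop_atTop.atTop_mul_const (by norm_num)
    refine tendsto_atTop_mono' _ ?_ hlow
    filter_upwards [hq_small] with n h2
    have hn0 : (0:ℝ) ≤ n := Nat.cast_nonneg n
    nlinarith
  have hc := core q hIoo hnq hn1q
  have hu1q : Tendsto (fun n : ℕ => u n * (1 - q n)) atTop (𝓝 1) := by
    have hone : Tendsto (fun n : ℕ => 1 - q n) atTop (𝓝 (1 - 0)) :=
      (tendsto_const_nhds (x := (1:ℝ))).sub hq0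
    simpa using hq.mul hone
  have hinv : Tendsto (fun n : ℕ => (u n * (1 - q n))⁻¹) atTop (𝓝 1) := by
    have := hu1q.inv₀ one_ne_zero
    simpa using this
  have hw : Tendsto (fun n : ℕ =>
      Real.sqrt ((α * (2*π*(n:ℝ)) ^ (1-β)) / (2*π*(n:ℝ)*(q n)*(1-q n)))) atTop (𝓝 1) := by
    have hs : Tendsto (fun n : ℕ => Real.sqrt ((u n * (1 - q n))⁻¹)) atTop (𝓝 1) := by
      have := (Real.continuous_sqrt.tendsto 1).comp hinv
      simpa [Function.comp_def] using this
    refine hs.congr' ?_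
    filter_upwards [hIoo, eventually_ge_atTop 1] with n hIo hn
    have hn1 : (1:ℝ) ≤ n := by exact_mod_cast hn
    have hpos : (0:ℝ) < 2*π*(n:ℝ) := by positivity
    have hv : (0:ℝ) < α * (2*π*(n:ℝ)) ^ (1-β) := by positivity
    congr 1
    have hX : 2*π*(n:ℝ)*(q n)*(1-q n)
        = (α * (2*π*(n:ℝ)) ^ (1-β)) * (u n * (1 - q n)) := by
      rw [hqeq n hn]
      simp only [hu_def]
      rw [hqeq n hn]
      rw [show (1:ℝ)-β = 1 + -β by ring, Real.rpow_add hpos, Real.rpow_one]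
      have hne : (2*π*(n:ℝ)) ^ β ≠ 0 := (Real.rpow_pos_of_pos hpos β).ne'
      rw [Real.rpow_neg hpos.le]
      field_simp
    rw [hX, div_mul_cancel_left₀ hv.ne']
  have hfinal := hc.mul hw
  rw [mul_one] at hfinal
  refine hfinal.congr' ?_
  filter_upwards [hIoo, eventually_ge_atTop 1] with n hIo hn
  have hn1 : (1:ℝ) ≤ n := by exact_mod_cast hn
  have hpos : (0:ℝ) < 2*π*(n:ℝ) := by positivity
  have hv : (0:ℝ) < α * (2*π*(n:ℝ)) ^ (1-β) := by positivity
  have hX0 : (0:ℝ) < 2*π*(n:ℝ)*(q n)*(1-q n) := by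
    have h1 := hIo.1
    have h2 := hIo.2
    have : (0:ℝ) < 2*π*(n:ℝ)*(q n) := mul_pos hpos h1
    exact mul_pos this (by linarith)
  have hsX : Real.sqrt (2*π*(n:ℝ)*(q n)*(1-q n)) ≠ 0 := (Real.sqrt_pos.2 hX0).ne'
  have hsqv : Real.sqrt (α * (2*π*(n:ℝ)) ^ (1-β))
      = α ^ (1/2:ℝ) * (2*π*(n:ℝ)) ^ ((1-β)/2) := by
    rw [Real.sqrt_mul hα.le, Real.sqrt_eq_rpow, Real.sqrt_eq_rpow,
      ← Real.rpow_mul hpos.le, show (1-β)*(1/2) = (1-β)/2 by ring]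
  rw [Real.sqrt_div hv.le, hsqv]
  field_simp


lemma aux_induction (p : ℝ) (hp0 : 0 < p) (hp1 : p < 1) :
    ∀ k : ℕ, 1 ≤ k →
      Tendsto (fun n : ℕ => (Pn n)^[k] p *
        ((p*(1-p)) ^ (-((-1/2:ℝ) ^ k)) * (2*π*(n:ℝ)) ^ ((1 - (-1/2:ℝ) ^ k)/3)))
        atTop (𝓝 1) := by
  have hpq : (0:ℝ) < p * (1-p) := mul_pos hp0 (by linarith)
  intro k
  induction k with
  | zero => intro h; omega
  | succ k ih =>
    intro _
    by_cases hk : 1 ≤ k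
    · -- inductive step
      have IH := ih hk
      set e : ℝ := (-1/2:ℝ) ^ k with he_def
      have habs : |e| ≤ 1/2 := by
        rw [he_def, abs_pow]
        have : |(-1/2:ℝ)| = 1/2 := by norm_num
        rw [this]
        calc ((1:ℝ)/2) ^ k ≤ (1/2) ^ 1 :=
              pow_le_pow_of_le_one (by norm_num) (by norm_num) hk
          _ = 1/2 := pow_one _
      have habs' : -(1/2:ℝ) ≤ e ∧ e ≤ 1/2 := abs_le.mp habs
      set β : ℝ := (1 - e)/3 with hβ_def
      have hβ0 : 0 < β := by rw [hβ_def]; linarith [habs'.2]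
      have hβ1 : β < 1 := by rw [hβ_def]; linarith [habs'.1]
      have hα : (0:ℝ) < (p*(1-p)) ^ e := Real.rpow_pos_of_pos hpq e
      have hinv : ((p*(1-p)) ^ e)⁻¹ = (p*(1-p)) ^ (-e) := (Real.rpow_neg hpq.le e).symm
      have hstep := step_lemma (fun n => (Pn n)^[k] p) ((p*(1-p)) ^ e) β hα hβ0 hβ1 ?_
      · refine hstep.congr fun n => ?_
        rw [Function.iterate_succ_apply']
        congr 2
        · rw [← Real.rpow_mul hpq.le]
          congr 1
          rw [show ((-1/2:ℝ)) ^ (k+1) = e * (-1/2) by rw [he_def, pow_succ]]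
          ring
        · congr 1
          rw [show ((-1/2:ℝ)) ^ (k+1) = e * (-1/2) by rw [he_def, pow_succ]]
          rw [hβ_def]
          ring
      · refine IH.congr fun n => ?_
        rw [hinv]
    · -- base case k = 0, so k+1 = 1
      have hk0 : k = 0 := by omega
      subst hk0
      have hb := base_case p hp0 hp1
      refine hb.congr fun n => ?_
      norm_num


/-- For every positive integer `k` and every `p ∈ (0,1)`,
`p_{k,n} ~ α_k·(2πn)^{-β_k}` as `n → ∞`, where `α_k = (p(1-p))^{(-1/2)^k}` and
`β_k = (1-(-1/2)^k)/3`. Here `p_{k,n} = (P_n)^[k] p`. -/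
theorem expected_successes_k_fixed (k : ℕ) (hk : 0 < k) (p : ℝ) (hp : p ∈ Set.Ioo (0:ℝ) 1) :
    Tendsto
      (fun n : ℕ =>
        (Pn n)^[k] p /
          ((p * (1 - p)) ^ ((-1/2 : ℝ) ^ k) *
            (2 * π * n) ^ (-((1 - (-1/2 : ℝ) ^ k) / 3))))
      atTop (𝓝 1) := by
  obtain ⟨hp0, hp1⟩ := hp
  have hpq : (0:ℝ) < p * (1-p) := mul_pos hp0 (by linarith)
  have haux := aux_induction p hp0 hp1 k hk
  refine haux.congr' ?_
  filter_upwards [eventually_ge_atTop 1] with n hn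
  have hn1 : (1:ℝ) ≤ n := by exact_mod_cast hn
  have h2pin : (0:ℝ) < 2*π*(n:ℝ) := by positivity
  set e : ℝ := (-1/2:ℝ) ^ k with he_def
  have hB : (p*(1-p)) ^ (-e) * (p*(1-p)) ^ e = 1 := by
    rw [Real.rpow_neg hpq.le]
    exact inv_mul_cancel₀ (Real.rpow_pos_of_pos hpq _).ne'
  have hC : (2*π*(n:ℝ)) ^ ((1 - e)/3) * (2*π*(n:ℝ)) ^ (-((1 - e)/3)) = 1 := by
    rw [Real.rpow_neg h2pin.le]
    exact mul_inv_cancel₀ (Real.rpow_pos_of_pos h2pin _).ne'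
  have hD : (p*(1-p)) ^ e * (2*π*(n:ℝ)) ^ (-((1 - e)/3)) ≠ 0 :=
    (mul_pos (Real.rpow_pos_of_pos hpq _) (Real.rpow_pos_of_pos h2pin _)).ne'
  rw [eq_div_iff hD]
  calc (Pn n)^[k] p * ((p*(1-p)) ^ (-e) * (2*π*(n:ℝ)) ^ ((1 - e)/3))
      * ((p*(1-p)) ^ e * (2*π*(n:ℝ)) ^ (-((1 - e)/3)))
      = (Pn n)^[k] p * (((p*(1-p)) ^ (-e) * (p*(1-p)) ^ e)
        * ((2*π*(n:ℝ)) ^ ((1 - e)/3) * (2*π*(n:ℝ)) ^ (-((1 - e)/3)))) := by ring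
    _ = (Pn n)^[k] p := by rw [hB, hC, one_mul, mul_one]
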